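/- arXiv:2312.10735 — 2 statements merged into one kernel-verified Lean document; each statement's English description precedes it below -/
import Mathlib

section
/- Let X be a zero-dimensional, locally compact, separable metrizable space. Then X is homogeneous if and only if X is discrete, or X is homeomorphic to 2^ω, or X is homeomorphic to ω × 2^ω. -/
open TopologicalSpace Set

/-- Homeomorphism between discrete spaces from an equiv. -/
def discHomeo {α β : Type*} [TopologicalSpace α] [TopologicalSpace β]
    [DiscreteTopology α] [DiscreteTopology β] (e : α ≃ β) : α ≃ₜ β :=
  ⟨e, continuous_of_discreteTopology, continuous_of_discreteTopology⟩

/-- xor-translation homeomorphism of Cantor space. -/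
def xorHomeo (c : ℕ → Bool) : (ℕ → Bool) ≃ₜ (ℕ → Bool) where
  toEquiv := Function.Involutive.toPerm (fun f n => xor (f n) (c n))
    (fun f => funext fun n => by simp)
  continuous_toFun := continuous_pi fun n =>
    ((continuous_of_discreteTopology (α := Bool) (f := fun b => xor b (c n)))).comp
      (continuous_apply n)
  continuous_invFun := continuous_pi fun n =>
    ((continuous_of_discreteTopology (α := Bool) (f := fun b => xor b (c n)))).comp
      (continuous_apply n)

lemma xorHomeo_apply (c f : ℕ → Bool) : xorHomeo c f = fun n => xor (f n) (c n) := rfl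

lemma cantor_homog (u v : ℕ → Bool) : ∃ h : (ℕ → Bool) ≃ₜ (ℕ → Bool), h u = v := by
  refine ⟨xorHomeo (fun n => xor (u n) (v n)), funext fun n => ?_⟩
  show xor (u n) (xor (u n) (v n)) = v n
  cases u n <;> cases v n <;> rfl


lemma prod_cantor_homog (p q : ℕ × (ℕ → Bool)) :
    ∃ h : (ℕ × (ℕ → Bool)) ≃ₜ (ℕ × (ℕ → Bool)), h p = q := by
  obtain ⟨hc, hcv⟩ := cantor_homog p.2 q.2
  refine ⟨(discHomeo (Equiv.swap p.1 q.1)).prodCongr hc, Prod.ext ?_ ?_⟩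
  · exact Equiv.swap_apply_left p.1 q.1
  · exact hcv

lemma homog_transfer {X Y : Type*} [TopologicalSpace X] [TopologicalSpace Y]
    (e : X ≃ₜ Y) (h : ∀ a b : Y, ∃ k : Y ≃ₜ Y, k a = b) :
    ∀ x y : X, ∃ h : X ≃ₜ X, h x = y := by
  intro x y
  obtain ⟨k, hk⟩ := h (e x) (e y)
  exact ⟨(e.trans k).trans e.symm, by simp [hk]⟩

lemma two_points {X : Type*} [TopologicalSpace X] (hcr : ∀ x : X, ¬IsOpen ({x} : Set X))
    {C : Set X} (hC : IsClopen C) (hne : C.Nonempty) :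
    ∃ x ∈ C, ∃ y ∈ C, x ≠ y := by
  obtain ⟨z, hz⟩ := hne
  by_contra h
  push_neg at h
  have hCz : C = {z} := by
    ext w
    constructor
    · intro hw; exact h w hw z hz
    · rintro rfl; exact hz
  exact hcr z (hCz ▸ hC.isOpen)

/-- clopen sets form a basis of an open (clopen) subspace. -/
lemma subtype_clopen_basis {X : Type*} [TopologicalSpace X]
    (hbasis : IsTopologicalBasis {s : Set X | IsClopen s})
    {V : Set X} (hV : IsOpen V) :
    IsTopologicalBasis {s : Set ↥V | IsClopen s} := by
  refine isTopologicalBasis_of_isOpen_of_nhds (fun u hu => hu.isOpen) ?_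
  intro a u ha hu
  rw [isOpen_induced_iff] at hu
  obtain ⟨O, hO, rfl⟩ := hu
  have haO : (a : X) ∈ O ∩ V := ⟨ha, a.2⟩
  obtain ⟨c, hc, hac, hsub⟩ := hbasis.exists_subset_of_mem_open haO (hO.inter hV)
  exact ⟨Subtype.val ⁻¹' c, hc.preimage continuous_subtype_val, hac,
    fun x hx => (hsub hx).1⟩

open TopologicalSpace Set
open scoped ENNReal

/-- A partition of `C` into exactly `k` nonempty clopen pieces of diameter `≤ ε`,
implemented as an `ℕ`-indexed family vanishing from index `k` on. -/
def IsPart {K : Type*} [MetricSpace K] (C : Set K) (ε : ℝ≥0∞) (k : ℕ) (Q : ℕ → Set K) : Prop :=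
  (∀ a, a < k → IsClopen (Q a) ∧ (Q a).Nonempty ∧ EMetric.diam (Q a) ≤ ε) ∧
  (∀ a, k ≤ a → Q a = ∅) ∧
  (∀ a b, a ≠ b → Disjoint (Q a) (Q b)) ∧
  (⋃ a, Q a) = C

section Part

variable {K : Type*} [MetricSpace K] [CompactSpace K]

lemma cover_lemma (hbasis : IsTopologicalBasis {s : Set K | IsClopen s})
    {C : Set K} (hC : IsClopen C) {ε : ℝ≥0∞} (hε : 0 < ε) :
    ∃ (n : ℕ) (V : ℕ → Set K), (∀ i, IsClopen (V i) ∧ EMetric.diam (V i) ≤ ε ∧ V i ⊆ C)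
      ∧ C ⊆ ⋃ i ∈ Finset.range n, V i := by
  have hW : ∀ x : ↥C, ∃ W : Set K, IsClopen W ∧ (x : K) ∈ W ∧
      W ⊆ EMetric.ball (x : K) (ε / 2) ∩ C := by
    intro x
    have hx : (x : K) ∈ EMetric.ball (x : K) (ε / 2) ∩ C :=
      ⟨EMetric.mem_ball_self (ENNReal.half_pos hε.ne'), x.2⟩
    obtain ⟨W, hW, hxW, hWs⟩ := hbasis.exists_subset_of_mem_open hx
      (EMetric.isOpen_ball.inter hC.isOpen)
    exact ⟨W, hW, hxW, hWs⟩
  choose W hW1 hW2 hW3 using hW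
  obtain ⟨t, ht⟩ := (hC.isClosed.isCompact).elim_finite_subcover W
    (fun x => (hW1 x).isOpen) (fun x hx => mem_iUnion.mpr ⟨⟨x, hx⟩, hW2 ⟨x, hx⟩⟩)
  classical
  set l := t.toList with hl
  refine ⟨l.length, fun i => if h : i < l.length then W (l.get ⟨i, h⟩) else ∅, ?_, ?_⟩
  · intro i
    beta_reduce
    by_cases h : i < l.length
    · rw [dif_pos h]
      refine ⟨hW1 _, ?_, fun y hy => ((hW3 _) hy).2⟩
      refine le_trans (EMetric.diam_mono (fun y hy => ((hW3 _) hy).1)) ?_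
      refine le_trans EMetric.diam_ball ?_
      exact ENNReal.mul_div_le
    · rw [dif_neg h]
      simp [EMetric.diam, EMetric.diam_empty, isClopen_empty]
  · intro x hx
    obtain ⟨i, hit, hxi⟩ := mem_iUnion₂.mp (ht hx)
    have : i ∈ l := by rw [hl]; exact Finset.mem_toList.mpr hit
    obtain ⟨j, hj⟩ := List.mem_iff_get.mp this
    refine mem_iUnion₂.mpr ⟨j.1, Finset.mem_range.mpr j.2, ?_⟩
    beta_reduce
    rw [dif_pos j.2, hj]
    exact hxi

lemma part_of_cover {ε : ℝ≥0∞} :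
    ∀ (n : ℕ) (C : Set K) (V : ℕ → Set K), IsClopen C → C.Nonempty →
      (∀ i, IsClopen (V i) ∧ EMetric.diam (V i) ≤ ε) →
      C ⊆ ⋃ i ∈ Finset.range n, V i →
      ∃ k Q, 1 ≤ k ∧ k ≤ n ∧ IsPart C ε k Q := by
  intro n
  induction n with
  | zero =>
    intro C V hC hne hV hcov
    obtain ⟨x, hx⟩ := hne
    simpa using hcov hx
  | succ n ih =>
    intro C V hC hne hV hcov
    set C' := C \ V n with hC'
    have hC'clopen : IsClopen C' := hC.diff (hV n).1
    by_cases h' : C'.Nonempty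
    · have hcov' : C' ⊆ ⋃ i ∈ Finset.range n, V i := by
        intro x hx
        obtain ⟨i, hi, hxi⟩ := mem_iUnion₂.mp (hcov hx.1)
        have hin : i < n + 1 := Finset.mem_range.mp hi
        have : i ≠ n := fun h => hx.2 (h ▸ hxi)
        exact mem_iUnion₂.mpr ⟨i, Finset.mem_range.mpr (by omega), hxi⟩
      obtain ⟨k, Q, hk1, hkn, hQ⟩ := ih C' V hC'clopen h' hV hcov'
      by_cases hmeet : (C ∩ V n).Nonempty
      · refine ⟨k + 1, fun a => if a = k then C ∩ V n else Q a, by omega, by omega,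
          ?_, ?_, ?_, ?_⟩
        · intro a ha
          beta_reduce
          by_cases hak : a = k
          · rw [if_pos hak]
            exact ⟨hC.inter (hV n).1, hmeet,
              le_trans (EMetric.diam_mono inter_subset_right) (hV n).2⟩
          · rw [if_neg hak]
            exact hQ.1 a (by omega)
        · intro a ha
          beta_reduce
          rw [if_neg (show ¬a = k by omega)]
          exact hQ.2.1 a (by omega)
        · intro a b hab
          have hsub : ∀ c, c ≠ k → Q c ⊆ C' := by
            intro c _
            rw [← hQ.2.2.2]
            exact subset_iUnion Q c
          have hdisj : ∀ c, c ≠ k → Disjoint (Q c) (C ∩ V n) := by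
            intro c hc
            refine Set.disjoint_left.mpr fun x hx hx2 => ?_
            exact (hsub c hc hx).2 hx2.2
          beta_reduce
          by_cases hak : a = k
          · rw [if_pos hak, if_neg (fun h => hab (by omega))]
            exact (hdisj b (fun h => hab (by omega))).symm
          · by_cases hbk : b = k
            · rw [if_neg hak, if_pos hbk]
              exact hdisj a hak
            · rw [if_neg hak, if_neg hbk]
              exact hQ.2.2.1 a b hab
        · ext x
          simp only [mem_iUnion]
          constructor
          · rintro ⟨a, ha⟩
            beta_reduce at ha
            by_cases hak : a = k
            · rw [if_pos hak] at ha; exact ha.1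
            · rw [if_neg hak] at ha
              have : x ∈ C' := by rw [← hQ.2.2.2]; exact mem_iUnion.mpr ⟨a, ha⟩
              exact this.1
          · intro hx
            by_cases hxn : x ∈ V n
            · exact ⟨k, by beta_reduce; rw [if_pos rfl]; exact ⟨hx, hxn⟩⟩
            · have : x ∈ C' := ⟨hx, hxn⟩
              rw [← hQ.2.2.2] at this
              obtain ⟨a, ha⟩ := mem_iUnion.mp this
              have hak : a ≠ k := by
                intro h
                rw [hQ.2.1 a (le_of_eq h.symm)] at ha
                exact ha
              exact ⟨a, by beta_reduce; rw [if_neg hak]; exact ha⟩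
      · -- C ∩ V n empty, so C' = C
        have : C' = C := by
          rw [hC']
          rw [not_nonempty_iff_eq_empty] at hmeet
          ext x
          constructor
          · exact fun h => h.1
          · intro h
            refine ⟨h, fun hv => ?_⟩
            have : x ∈ C ∩ V n := ⟨h, hv⟩
            simp [hmeet] at this
        exact ⟨k, Q, hk1, by omega, this ▸ hQ⟩
    · -- C ⊆ V n
      rw [not_nonempty_iff_eq_empty] at h'
      have hCV : C ⊆ V n := by
        intro x hx
        by_contra hxv
        have : x ∈ C' := ⟨hx, hxv⟩
        simp [h'] at this
      refine ⟨1, fun a => if a = 0 then C else ∅, le_refl 1, by omega, ?_, ?_, ?_, ?_⟩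
      · intro a ha
        beta_reduce
        have : a = 0 := by omega
        rw [if_pos this]
        exact ⟨hC, hne, le_trans (EMetric.diam_mono hCV) (hV n).2⟩
      · intro a ha
        beta_reduce
        rw [if_neg (show ¬a = 0 by omega)]
      · intro a b hab
        beta_reduce
        by_cases h0 : a = 0
        · rw [if_neg (fun h : b = 0 => hab (by omega))]
          exact Set.disjoint_empty _
        · rw [if_neg h0]
          exact empty_disjoint _
      · ext x
        simp only [mem_iUnion]
        constructor
        · rintro ⟨a, ha⟩
          beta_reduce at ha
          by_cases h0 : a = 0
          · rw [if_pos h0] at ha; exact ha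
          · rw [if_neg h0] at ha; exact absurd ha (notMem_empty x)
        · intro hx
          exact ⟨0, by beta_reduce; rw [if_pos rfl]; exact hx⟩

end Part
section Part2

variable {K : Type*} [MetricSpace K] [CompactSpace K]

lemma split_lemma (hbasis : IsTopologicalBasis {s : Set K | IsClopen s})
    (hcr : ∀ x : K, ¬IsOpen ({x} : Set K))
    {C : Set K} (hC : IsClopen C) (hne : C.Nonempty) :
    ∃ A B : Set K, IsClopen A ∧ IsClopen B ∧ A.Nonempty ∧ B.Nonempty ∧
      Disjoint A B ∧ A ∪ B = C := by
  obtain ⟨x, hx, y, hy, hxy⟩ := two_points hcr hC hne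
  have hopen : IsOpen (C \ {y}) := hC.isOpen.sdiff isClosed_singleton
  obtain ⟨A, hA, hxA, hAsub⟩ := hbasis.exists_subset_of_mem_open
    (show x ∈ C \ {y} from ⟨hx, hxy⟩) hopen
  refine ⟨A, C \ A, hA, hC.diff hA, ⟨x, hxA⟩, ⟨y, hy, fun h => (hAsub h).2 rfl⟩,
    disjoint_sdiff_right, ?_⟩
  rw [union_diff_cancel (fun z hz => (hAsub hz).1)]

lemma pad_lemma {ε : ℝ≥0∞} (hbasis : IsTopologicalBasis {s : Set K | IsClopen s})
    (hcr : ∀ x : K, ¬IsOpen ({x} : Set K)) :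
    ∀ (j k : ℕ) (C : Set K) (Q : ℕ → Set K), 1 ≤ k → IsPart C ε k Q →
      ∃ Q', IsPart C ε (k + j) Q' := by
  intro j
  induction j with
  | zero => exact fun k C Q _ hQ => ⟨Q, hQ⟩
  | succ j ih =>
    intro k C Q hk hQ
    obtain ⟨hgood, hzero, hdisj, huniv⟩ := hQ
    obtain ⟨hQ0clopen, hQ0ne, hQ0diam⟩ := hgood 0 (by omega)
    obtain ⟨A, B, hA, hB, hAne, hBne, hAB, hABU⟩ := split_lemma hbasis hcr hQ0clopen hQ0ne
    have hAsub : A ⊆ Q 0 := hABU ▸ subset_union_left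
    have hBsub : B ⊆ Q 0 := hABU ▸ subset_union_right
    have step : ∃ Q', IsPart C ε (k + 1) Q' := by
      refine ⟨fun a => if a = 0 then A else if a = k then B else Q a, ?_, ?_, ?_, ?_⟩
      · intro a ha
        beta_reduce
        by_cases h0 : a = 0
        · rw [if_pos h0]
          exact ⟨hA, hAne, le_trans (EMetric.diam_mono hAsub) hQ0diam⟩
        · by_cases hk' : a = k
          · rw [if_neg h0, if_pos hk']
            exact ⟨hB, hBne, le_trans (EMetric.diam_mono hBsub) hQ0diam⟩
          · rw [if_neg h0, if_neg hk']
            exact hgood a (by omega)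
      · intro a ha
        beta_reduce
        rw [if_neg (show ¬a = 0 by omega), if_neg (show ¬a = k by omega)]
        exact hzero a (by omega)
      · intro a b hab
        beta_reduce
        by_cases ha0 : a = 0
        · subst ha0
          rw [if_pos rfl]
          by_cases hbk : b = k
          · rw [if_neg (by omega), if_pos hbk]
            exact hAB
          · rw [if_neg (fun h => hab h.symm), if_neg hbk]
            exact (hdisj 0 b hab).mono_left hAsub
        · by_cases hak : a = k
          · rw [if_neg ha0, if_pos hak]
            by_cases hb0 : b = 0
            · rw [if_pos hb0]
              exact hAB.symm
            · by_cases hbk : b = k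
              · exact absurd (hak.trans hbk.symm) hab
              · rw [if_neg hb0, if_neg hbk]
                exact (hdisj 0 b (fun h => hb0 h.symm)).mono_left hBsub
          · rw [if_neg ha0, if_neg hak]
            by_cases hb0 : b = 0
            · rw [if_pos hb0]
              exact ((hdisj 0 a (fun h => ha0 h.symm)).mono_left hAsub).symm
            · by_cases hbk : b = k
              · rw [if_neg hb0, if_pos hbk]
                exact ((hdisj 0 a (fun h => ha0 h.symm)).mono_left hBsub).symm
              · rw [if_neg hb0, if_neg hbk]
                exact hdisj a b hab
      · ext x
        simp only [mem_iUnion]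
        constructor
        · rintro ⟨a, ha⟩
          rw [← huniv]
          by_cases h0 : a = 0
          · rw [if_pos h0] at ha
            exact mem_iUnion.mpr ⟨0, hAsub ha⟩
          · by_cases hk' : a = k
            · rw [if_neg h0, if_pos hk'] at ha
              exact mem_iUnion.mpr ⟨0, hBsub ha⟩
            · rw [if_neg h0, if_neg hk'] at ha
              exact mem_iUnion.mpr ⟨a, ha⟩
        · intro hx
          rw [← huniv] at hx
          obtain ⟨a, ha⟩ := mem_iUnion.mp hx
          by_cases h0 : a = 0
          · subst h0
            rw [← hABU] at ha
            rcases ha with hxa | hxb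
            · exact ⟨0, by rw [if_pos rfl]; exact hxa⟩
            · exact ⟨k, by rw [if_neg (by omega), if_pos rfl]; exact hxb⟩
          · by_cases hk' : a = k
            · rw [hk', hzero k (le_refl k)] at ha
              exact absurd ha (notMem_empty x)
            · exact ⟨a, by rw [if_neg h0, if_neg hk']; exact ha⟩
    obtain ⟨Q', hQ'⟩ := step
    have h2 := ih (k + 1) C Q' (by omega) hQ'
    rwa [show k + 1 + j = k + (j + 1) from by omega] at h2

/-- The global partition lemma: a uniform bound `k₀` such that every nonempty clopen
set can be partitioned into exactly `N` pieces of diameter `≤ ε`, for every `N ≥ k₀`. -/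
lemma global_part [Nonempty K] {ε : ℝ≥0∞} (hε : 0 < ε)
    (hbasis : IsTopologicalBasis {s : Set K | IsClopen s})
    (hcr : ∀ x : K, ¬IsOpen ({x} : Set K)) :
    ∃ k₀ : ℕ, 1 ≤ k₀ ∧ ∀ C : Set K, IsClopen C → C.Nonempty → ∀ N, k₀ ≤ N →
      ∃ Q, IsPart C ε N Q := by
  obtain ⟨n, V, hV, hcov⟩ := cover_lemma hbasis isClopen_univ hε
  refine ⟨max n 1, le_max_right n 1, fun C hC hne N hN => ?_⟩
  have hcov' : C ⊆ ⋃ i ∈ Finset.range n, V i := fun x _ => hcov (mem_univ x)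
  obtain ⟨k, Q, hk1, hkn, hQ⟩ := part_of_cover n C V hC hne (fun i => ⟨(hV i).1, (hV i).2.1⟩) hcov'
  have hkN : k ≤ N := le_trans (le_trans hkn (le_max_left n 1)) hN
  obtain ⟨Q', hQ'⟩ := pad_lemma hbasis hcr (N - k) k C Q hk1 hQ
  rw [Nat.add_sub_cancel' hkN] at hQ'
  exact ⟨Q', hQ'⟩

end Part2
open CantorScheme PiNat in
theorem brouwer {K : Type*} [TopologicalSpace K] [TopologicalSpace.MetrizableSpace K]
    [CompactSpace K] [Nonempty K]
    (hbasis : IsTopologicalBasis {s : Set K | IsClopen s})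
    (hcr : ∀ x : K, ¬IsOpen ({x} : Set K)) :
    Nonempty (K ≃ₜ (ℕ → Bool)) := by
  letI : MetricSpace K := TopologicalSpace.metrizableSpaceMetric K
  classical
  set εs : ℕ → ℝ≥0∞ := fun n => (((n + 1 : ℕ) : ℝ≥0∞))⁻¹ with hεs
  have hεpos : ∀ n, 0 < εs n := fun n =>
    ENNReal.inv_pos.mpr (ENNReal.natCast_ne_top (n + 1))
  have hglob : ∀ n : ℕ, ∃ k₀ : ℕ, 1 ≤ k₀ ∧ ∀ C : Set K, IsClopen C → C.Nonempty →
      ∀ N, k₀ ≤ N → ∃ Q, IsPart C (εs n) N Q := fun n => global_part (hεpos n) hbasis hcr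
  choose k₀ hk₀ hpart using hglob
  set t : ℕ → ℕ := fun n => 2 ^ (k₀ n) with ht
  have htk : ∀ n, k₀ n ≤ t n := fun n => (Nat.lt_two_pow_self).le
  have htpos : ∀ n, 0 < t n := fun n => lt_of_lt_of_le (hk₀ n) (htk n)
  -- the choice of partitions
  have hpfex : ∀ (C : Set K) (n : ℕ), ∃ Q : ℕ → Set K,
      (IsClopen C → C.Nonempty → IsPart C (εs n) (t n) Q) ∧
      (¬(IsClopen C ∧ C.Nonempty) → ∀ a, Q a = ∅) := by
    intro C n
    by_cases h : IsClopen C ∧ C.Nonempty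
    · obtain ⟨Q, hQ⟩ := hpart n C h.1 h.2 (t n) (htk n)
      exact ⟨Q, fun _ _ => hQ, fun h' => absurd h h'⟩
    · exact ⟨fun _ => ∅, fun h1 h2 => absurd ⟨h1, h2⟩ h, fun _ _ => rfl⟩
  choose pf hpf1 hpf2 using hpfex
  -- the scheme
  set A : List ℕ → Set K := fun l => l.rec Set.univ (fun a l' ih => pf ih l'.length a) with hA
  have hA_cons : ∀ (a : ℕ) (l : List ℕ), A (a :: l) = pf (A l) l.length a := fun _ _ => rfl
  have hA_nil : A [] = Set.univ := rfl
  -- basic invariant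
  have hF1 : ∀ l : List ℕ, (IsClopen (A l) ∧ (A l).Nonempty) ∨ A l = ∅ := by
    intro l
    induction l with
    | nil => exact Or.inl ⟨isClopen_univ, univ_nonempty⟩
    | cons a l ih =>
      rw [hA_cons]
      rcases ih with ⟨hcl, hne⟩ | hemp
      · have hp := hpf1 (A l) l.length hcl hne
        rcases lt_or_ge a (t l.length) with h | h
        · exact Or.inl ⟨(hp.1 a h).1, (hp.1 a h).2.1⟩
        · exact Or.inr (hp.2.1 a h)
      · rw [hemp]
        exact Or.inr (hpf2 ∅ l.length (fun h => (not_nonempty_empty h.2)) a)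
  have hempty_piece : ∀ (l : List ℕ) (a : ℕ), A l = ∅ → A (a :: l) = ∅ := by
    intro l a h
    rw [hA_cons, h]
    exact hpf2 ∅ l.length (fun h => (not_nonempty_empty h.2)) a
  have hdiam : ∀ (l : List ℕ) (a : ℕ), EMetric.diam (A (a :: l)) ≤ εs l.length := by
    intro l a
    rcases hF1 l with ⟨hcl, hne⟩ | hemp
    · have hp := hpf1 (A l) l.length hcl hne
      rcases lt_or_ge a (t l.length) with h | h
      · rw [hA_cons]; exact (hp.1 a h).2.2
      · rw [hA_cons, hp.2.1 a h]; simp [EMetric.diam]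
    · rw [hempty_piece l a hemp]; simp [EMetric.diam]
  have hanti : ∀ (l : List ℕ) (a : ℕ), A (a :: l) ⊆ A l := by
    intro l a
    rcases hF1 l with ⟨hcl, hne⟩ | hemp
    · have hp := hpf1 (A l) l.length hcl hne
      rw [hA_cons]
      conv_rhs => rw [← hp.2.2.2]
      exact Set.subset_iUnion _ a
    · rw [hempty_piece l a hemp, hemp]
  have hdisjA : CantorScheme.Disjoint A := by
    intro l a b hab
    rcases hF1 l with ⟨hcl, hne⟩ | hemp
    · have hp := hpf1 (A l) l.length hcl hne
      rw [hA_cons, hA_cons]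
      exact hp.2.2.1 a b hab
    · rw [hempty_piece l a hemp, hempty_piece l b hemp]
      simp
  have hvalidity : ∀ (l : List ℕ) (a : ℕ), t l.length ≤ a → A (a :: l) = ∅ := by
    intro l a h
    rcases hF1 l with ⟨hcl, hne⟩ | hemp
    · rw [hA_cons]; exact (hpf1 (A l) l.length hcl hne).2.1 a h
    · exact hempty_piece l a hemp
  set D : Set (ℕ → ℕ) := {x | ∀ n, x n < t n} with hD
  have hD1 : ∀ x ∈ D, ∀ n, (A (res x n)).Nonempty ∧ IsClopen (A (res x n)) := by
    intro x hx n
    induction n with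
    | zero => rw [res_zero, hA_nil]; exact ⟨univ_nonempty, isClopen_univ⟩
    | succ n ih =>
      rw [res_succ, hA_cons]
      have hp := hpf1 (A (res x n)) (res x n).length ih.2 ih.1
      rw [res_length] at hp
      have hlt : x n < t n := hx n
      rw [res_length]
      exact ⟨(hp.1 (x n) hlt).2.1, (hp.1 (x n) hlt).1⟩
  have hdomD : (inducedMap A).1 = D := by
    ext x
    constructor
    · intro hx
      intro n
      by_contra hlt
      push_neg at hlt
      have hempty : A (res x (n + 1)) = ∅ := by
        rw [res_succ]
        exact hvalidity (res x n) (x n) (by rw [res_length]; exact hlt)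
      obtain ⟨y, hy⟩ := hx
      rw [Set.mem_iInter] at hy
      have := hy (n + 1)
      rw [hempty] at this
      exact this
    · intro hx
      have := IsCompact.nonempty_iInter_of_sequence_nonempty_isCompact_isClosed
        (fun n => A (res x n))
        (fun n => by show A (res x (n + 1)) ⊆ A (res x n); rw [res_succ]; exact hanti _ _)
        (fun n => (hD1 x hx n).1)
        ((hD1 x hx 0).2.isClosed.isCompact)
        (fun n => (hD1 x hx n).2.isClosed)
      exact this
  have hvd : VanishingDiam A := by
    intro x
    rw [ENNReal.tendsto_atTop_zero]
    intro ε hε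
    obtain ⟨m, hm⟩ := ENNReal.exists_inv_nat_lt hε.ne'
    refine ⟨m + 1, fun n hn => ?_⟩
    obtain ⟨n, rfl⟩ : ∃ n', n = n' + 1 := ⟨n - 1, by omega⟩
    rw [res_succ]
    refine le_trans (hdiam (res x n) (x n)) ?_
    rw [res_length, hεs]
    have h1 : ((m : ℕ) : ℝ≥0∞) ≤ ((n + 1 : ℕ) : ℝ≥0∞) := Nat.cast_le.mpr (by omega)
    exact le_trans (ENNReal.inv_le_inv.mpr h1) hm.le
  have hinj := hdisjA.map_injective
  have hcont := hvd.map_continuous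
  have hsurj : Function.Surjective (inducedMap A).2 := by
    intro y
    have hex : ∀ l : List ℕ, y ∈ A l → ∃ a, y ∈ A (a :: l) := by
      intro l hy
      rcases hF1 l with ⟨hcl, hne⟩ | hemp
      · have hp := hpf1 (A l) l.length hcl hne
        have : y ∈ ⋃ a, pf (A l) l.length a := by rw [hp.2.2.2]; exact hy
        obtain ⟨a, ha⟩ := Set.mem_iUnion.mp this
        exact ⟨a, by rw [hA_cons]; exact ha⟩
      · rw [hemp] at hy; exact absurd hy (Set.notMem_empty y)
    set L : ∀ _ : ℕ, {l : List ℕ // y ∈ A l} :=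
      fun n => Nat.rec ⟨[], Set.mem_univ y⟩
        (fun _ ih => ⟨(hex ih.1 ih.2).choose :: ih.1, (hex ih.1 ih.2).choose_spec⟩) n with hL
    set x : ℕ → ℕ := fun n => (L (n + 1)).1.headI with hxdef
    have hLsucc : ∀ n, (L (n + 1)).1 = (hex (L n).1 (L n).2).choose :: (L n).1 := fun n => rfl
    have hres : ∀ n, res x n = (L n).1 := by
      intro n
      induction n with
      | zero => rw [res_zero]; rfl
      | succ n ih =>
        rw [res_succ, hLsucc n, ih]
        congr 1
    have hyx : ∀ n, y ∈ A (res x n) := fun n => by rw [hres n]; exact (L n).2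
    have hxdom : x ∈ (inducedMap A).1 := ⟨y, Set.mem_iInter.mpr hyx⟩
    refine ⟨⟨x, hxdom⟩, ?_⟩
    apply eq_of_forall_dist_le
    intro ε hε
    obtain ⟨n, hn⟩ := hvd.dist_lt ε hε x
    exact (hn _ (map_mem ⟨x, hxdom⟩ n) _ (hyx n)).le
  -- assembling the homeomorphism
  haveI : ∀ n, Nonempty (Fin (k₀ n)) := fun n => ⟨⟨0, hk₀ n⟩⟩
  haveI : Infinite (Σ n : ℕ, Fin (k₀ n)) :=
    Infinite.of_injective (fun n => ⟨n, ⟨0, hk₀ n⟩⟩)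
      (fun a b h => by injection h)
  obtain ⟨din⟩ := nonempty_denumerable (Σ n : ℕ, Fin (k₀ n))
  let eσ : (Σ n : ℕ, Fin (k₀ n)) ≃ ℕ := Denumerable.eqv _
  let e1 : (ℕ → Bool) ≃ₜ ((Σ n : ℕ, Fin (k₀ n)) → Bool) :=
    (Homeomorph.piCongrLeft (Y := fun _ => Bool) eσ).symm
  let e2 : ((Σ n : ℕ, Fin (k₀ n)) → Bool) ≃ₜ (∀ n, Fin (k₀ n) → Bool) :=
    { toEquiv := Equiv.piCurry (fun _ _ => Bool)
      continuous_toFun := continuous_pi fun a => continuous_pi fun b =>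
        (show Continuous fun f : ((Σ n : ℕ, Fin (k₀ n)) → Bool) => f ⟨a, b⟩ from
          continuous_apply _)
      continuous_invFun := continuous_pi fun p => (continuous_apply p.2).comp (continuous_apply p.1) }
  let e3 : (∀ n, Fin (k₀ n) → Bool) ≃ₜ (∀ n, Fin (t n)) :=
    Homeomorph.piCongrRight fun n => discHomeo (Fintype.equivFinOfCardEq (by
      rw [Fintype.card_pi_const, Fintype.card_bool]))
  let e4 : (∀ n, Fin (t n)) ≃ₜ ↥D :=
    { toFun := fun f => ⟨fun n => (f n : ℕ), fun n => (f n).isLt⟩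
      invFun := fun x n => ⟨x.1 n, x.2 n⟩
      left_inv := fun f => funext fun n => rfl
      right_inv := fun x => Subtype.ext (funext fun n => rfl)
      continuous_toFun := Continuous.subtype_mk (continuous_pi fun n =>
        (continuous_of_discreteTopology (f := (Fin.val : Fin (t n) → ℕ))).comp
          (continuous_apply n)) _
      continuous_invFun := by
        refine continuous_pi fun n => ?_
        have heq : (fun x : ↥D => (⟨x.1 n, x.2 n⟩ : Fin (t n))) =
            (fun m : ℕ => if h : m < t n then (⟨m, h⟩ : Fin (t n)) else ⟨0, htpos n⟩) ∘
              (fun x : ↥D => x.1 n) := by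
          funext x
          simp only [Function.comp_apply, dif_pos (x.2 n)]
        rw [heq]
        exact (continuous_of_discreteTopology).comp
          ((continuous_apply n).comp continuous_subtype_val) }
  let e5 : ↥D ≃ₜ ↥(inducedMap A).1 := Homeomorph.setCongr hdomD.symm
  let ebig : (ℕ → Bool) ≃ₜ ↥(inducedMap A).1 := (((e1.trans e2).trans e3).trans e4).trans e5
  let E : (ℕ → Bool) ≃ K := ebig.toEquiv.trans (Equiv.ofBijective _ ⟨hinj, hsurj⟩)
  have hEcont : Continuous E := hcont.comp ebig.continuous
  exact ⟨(Continuous.homeoOfEquivCompactToT2 (f := E) hEcont).symm⟩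
theorem noncompact_case {X : Type*} [TopologicalSpace X] [TopologicalSpace.MetrizableSpace X]
    [TopologicalSpace.SeparableSpace X] [LocallyCompactSpace X] [Nonempty X]
    (hbasis : IsTopologicalBasis {s : Set X | IsClopen s})
    (hcr : ∀ x : X, ¬IsOpen ({x} : Set X))
    (hnc : ¬CompactSpace X) :
    Nonempty (X ≃ₜ ℕ × (ℕ → Bool)) := by
  letI : MetricSpace X := TopologicalSpace.metrizableSpaceMetric X
  haveI : SecondCountableTopology X := UniformSpace.secondCountable_of_separable X
  classical
  have hcov : ∀ x : X, ∃ c : Set X, IsClopen c ∧ IsCompact c ∧ x ∈ c := by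
    intro x
    obtain ⟨Kx, hKcomp, hKmem⟩ := exists_compact_mem_nhds x
    obtain ⟨c, hc, hxc, hsub⟩ := hbasis.exists_subset_of_mem_open
      (mem_interior_iff_mem_nhds.mpr hKmem) isOpen_interior
    exact ⟨c, hc, hKcomp.of_isClosed_subset hc.isClosed (hsub.trans interior_subset), hxc⟩
  choose W hW1 hW2 hW3 using hcov
  obtain ⟨T, hTc, hTU⟩ := TopologicalSpace.isOpen_iUnion_countable W (fun x => (hW1 x).isOpen)
  have hTne : T.Nonempty := by
    by_contra h
    rw [not_nonempty_iff_eq_empty] at h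
    have z := Classical.arbitrary X
    have : z ∈ ⋃ x ∈ T, W x := by
      rw [hTU]; exact mem_iUnion.mpr ⟨z, hW3 z⟩
    simp [h] at this
  obtain ⟨f, hf⟩ := hTc.exists_eq_range hTne
  set U : ℕ → Set X := fun n => W (f n) with hU
  have hUuniv : ⋃ n, U n = univ := by
    apply eq_univ_of_forall
    intro z
    have : z ∈ ⋃ x ∈ T, W x := by rw [hTU]; exact mem_iUnion.mpr ⟨z, hW3 z⟩
    obtain ⟨i, hiT, hzi⟩ := mem_iUnion₂.mp this
    rw [hf] at hiT
    obtain ⟨n, rfl⟩ := hiT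
    exact mem_iUnion.mpr ⟨n, hzi⟩
  have hUclopen : ∀ n, IsClopen (U n) := fun n => hW1 (f n)
  have hUcomp : ∀ n, IsCompact (U n) := fun n => hW2 (f n)
  set V : ℕ → Set X := fun n => U n \ ⋃ j ∈ Finset.range n, U j with hV
  have hVclopen : ∀ n, IsClopen (V n) :=
    fun n => (hUclopen n).diff (isClopen_biUnion_finset (fun j _ => hUclopen j))
  have hVcomp : ∀ n, IsCompact (V n) :=
    fun n => (hUcomp n).of_isClosed_subset (hVclopen n).isClosed diff_subset
  have hVdisj : ∀ i j, i ≠ j → Disjoint (V i) (V j) := by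
    have key : ∀ i j, i < j → Disjoint (V i) (V j) := by
      intro i j hij
      refine Set.disjoint_left.mpr fun z hzi hzj => ?_
      exact hzj.2 (mem_iUnion₂.mpr ⟨i, Finset.mem_range.mpr hij, hzi.1⟩)
    intro i j hij
    rcases lt_or_gt_of_ne hij with h | h
    · exact key i j h
    · exact (key j i h).symm
  have hVcover : ∀ z : X, ∃ n, z ∈ V n := by
    intro z
    have hex : ∃ n, z ∈ U n := by
      have : z ∈ ⋃ n, U n := hUuniv ▸ mem_univ z
      exact mem_iUnion.mp this
    refine ⟨Nat.find hex, Nat.find_spec hex, fun hmem => ?_⟩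
    obtain ⟨j, hj, hzj⟩ := mem_iUnion₂.mp hmem
    exact Nat.find_min hex (Finset.mem_range.mp hj) hzj
  haveI hIinf : Infinite {n : ℕ // (V n).Nonempty} := by
    refine Set.Infinite.to_subtype (s := {n : ℕ | (V n).Nonempty}) ?_
    intro hfin
    apply hnc
    rw [← isCompact_univ_iff]
    have huniv : univ = ⋃ n ∈ {n : ℕ | (V n).Nonempty}, V n := by
      apply Subset.antisymm
      · intro z _
        obtain ⟨n, hn⟩ := hVcover z
        exact mem_iUnion₂.mpr ⟨n, ⟨z, hn⟩, hn⟩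
      · exact subset_univ _
    rw [huniv]
    exact hfin.isCompact_biUnion (fun i _ => hVcomp i)
  have hpieces : ∀ i : {n : ℕ // (V n).Nonempty}, Nonempty (↥(V i.1) ≃ₜ (ℕ → Bool)) := by
    intro i
    haveI : CompactSpace ↥(V i.1) := isCompact_iff_compactSpace.mp (hVcomp i.1)
    haveI : Nonempty ↥(V i.1) := i.2.to_subtype
    refine brouwer (subtype_clopen_basis hbasis (hVclopen i.1).isOpen) ?_
    intro p hp
    apply hcr (p : X)
    have := (hVclopen i.1).isOpen.isOpenMap_subtype_val _ hp
    rwa [Set.image_singleton] at this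
  let he : ∀ i : {n : ℕ // (V n).Nonempty}, ↥(V i.1) ≃ₜ (ℕ → Bool) :=
    fun i => (hpieces i).some
  let ψ : {n : ℕ // (V n).Nonempty} × (ℕ → Bool) → X :=
    fun p => ((he p.1).symm p.2 : ↥(V p.1.1)).1
  have hmem : ∀ p, ψ p ∈ V p.1.1 := fun p => ((he p.1).symm p.2).2
  have hinj : Function.Injective ψ := by
    rintro ⟨i, y⟩ ⟨j, z⟩ h
    have hij : i = j := by
      by_contra hne
      have hnd : ¬Disjoint (V i.1) (V j.1) :=
        Set.not_disjoint_iff.mpr ⟨ψ (i, y), hmem (i, y), h ▸ hmem (j, z)⟩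
      exact hnd (hVdisj i.1 j.1 (fun hh => hne (Subtype.ext hh)))
    subst hij
    have hyz : y = z := (he i).symm.injective (Subtype.ext h)
    rw [hyz]
  have hsurjψ : Function.Surjective ψ := by
    intro z
    obtain ⟨n, hn⟩ := hVcover z
    refine ⟨(⟨n, ⟨z, hn⟩⟩, he ⟨n, ⟨z, hn⟩⟩ ⟨z, hn⟩), ?_⟩
    show (((he ⟨n, ⟨z, hn⟩⟩).symm ((he ⟨n, ⟨z, hn⟩⟩) ⟨z, hn⟩) : ↥(V n)) : X) = z
    rw [Homeomorph.symm_apply_apply]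
  have hcontψ : Continuous ψ := by
    rw [continuous_iff_continuousAt]
    rintro ⟨i, y⟩
    have hopen : IsOpen {p : {n : ℕ // (V n).Nonempty} × (ℕ → Bool) | p.1 = i} :=
      (isOpen_discrete {i}).preimage continuous_fst
    have hg : Continuous (fun p : {n : ℕ // (V n).Nonempty} × (ℕ → Bool) =>
        (((he i).symm p.2 : ↥(V i.1)) : X)) :=
      continuous_subtype_val.comp ((he i).symm.continuous.comp continuous_snd)
    refine hg.continuousAt.congr_of_eventuallyEq ?_
    refine Filter.eventuallyEq_of_mem (hopen.mem_nhds rfl) ?_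
    rintro ⟨j, z⟩ hj
    simp only [mem_setOf_eq] at hj
    subst hj
    rfl
  have hopenψ : IsOpenMap ψ := by
    intro O hO
    rw [isOpen_iff_forall_mem_open]
    rintro z ⟨⟨i, y⟩, hpO, rfl⟩
    refine ⟨Subtype.val '' ((he i).symm '' {c | (i, c) ∈ O}), ?_, ?_, ?_⟩
    · rintro w ⟨v, ⟨c, hc, rfl⟩, rfl⟩
      exact ⟨(i, c), hc, rfl⟩
    · exact (hVclopen i.1).isOpen.isOpenMap_subtype_val _
        ((he i).symm.isOpenMap _ (hO.preimage (Continuous.prodMk_right i)))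
    · exact ⟨(he i).symm y, ⟨y, hpO, rfl⟩, rfl⟩
  obtain ⟨dI⟩ := nonempty_denumerable {n : ℕ // (V n).Nonempty}
  let eI : {n : ℕ // (V n).Nonempty} ≃ ℕ := @Denumerable.eqv _ dI
  let h1 : ({n : ℕ // (V n).Nonempty} × (ℕ → Bool)) ≃ₜ X :=
    Equiv.toHomeomorphOfContinuousOpen (Equiv.ofBijective ψ ⟨hinj, hsurjψ⟩) hcontψ hopenψ
  exact ⟨h1.symm.trans ((discHomeo eI).prodCongr (Homeomorph.refl _))⟩

/-- A zero-dimensional, locally compact, separable metrizable space is homogeneous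
iff it is discrete, or homeomorphic to the Cantor set `2^ω`, or homeomorphic to
`ω × 2^ω`. -/
theorem statement10 {X : Type*} [TopologicalSpace X]
    [TopologicalSpace.MetrizableSpace X] [TopologicalSpace.SeparableSpace X]
    [LocallyCompactSpace X] [Nonempty X]
    (hbasis : TopologicalSpace.IsTopologicalBasis {s : Set X | IsClopen s}) :
    (∀ x y : X, ∃ h : X ≃ₜ X, h x = y) ↔
      (DiscreteTopology X ∨ Nonempty (X ≃ₜ (ℕ → Bool)) ∨
        Nonempty (X ≃ₜ (ℕ × (ℕ → Bool)))) := by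
  classical
  constructor
  · intro hhom
    by_cases hd : ∃ x : X, IsOpen ({x} : Set X)
    · left
      obtain ⟨x, hx⟩ := hd
      rw [discreteTopology_iff_isOpen_singleton]
      intro y
      obtain ⟨h, hxy⟩ := hhom x y
      have himg := h.isOpenMap _ hx
      rwa [Set.image_singleton, hxy] at himg
    · push_neg at hd
      by_cases hc : CompactSpace X
      · exact Or.inr (Or.inl (brouwer hbasis hd))
      · exact Or.inr (Or.inr (noncompact_case hbasis hd hc))
  · rintro (hdisc | e | e)
    · intro x y
      exact ⟨discHomeo (Equiv.swap x y), Equiv.swap_apply_left x y⟩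
    · exact homog_transfer e.some cantor_homog
    · exact homog_transfer e.some prod_cantor_homog
end

section
/- Let Z be a zero-dimensional separable metrizable space, ξ < ω₁, and let D ⊆ P(Z) be selfdual. Set Γ = SU_ξ(D). Then the dual class Γ̌ = {Z \ A : A ∈ Γ} has the separation property: for all A₀, A₁ ∈ Γ̌ with A₀ ∩ A₁ = ∅ there exists C ∈ Γ ∩ Γ̌ with A₀ ⊆ C ⊆ Z \ A₁. -/
/-- The additive Borel hierarchy `Σ⁰_ξ` on a topological space, indexed by ordinals. -/
noncomputable def Sigma0 (X : Type*) [TopologicalSpace X] (ξ : Ordinal.{0}) : Set (Set X) :=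
  {s | (ξ = 1 ∧ IsOpen s) ∨
    (1 < ξ ∧ ∃ (f : ℕ → Set X) (o : ℕ → Set.Iio ξ),
      (∀ n, 1 ≤ (o n).1) ∧ (∀ n, (f n)ᶜ ∈ Sigma0 X (o n).1) ∧ s = ⋃ n, f n)}
termination_by ξ
decreasing_by exact (o n).2

/-- `SU_ξ(Γ)`: separated unions `⋃ₙ (Aₙ ∩ Uₙ)` with `Aₙ ∈ Γ` and `(Uₙ)` pairwise
disjoint `Σ⁰_{1+ξ}` sets. -/
noncomputable def SU (X : Type*) [TopologicalSpace X] (ξ : Ordinal.{0})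
    (Γ : Set (Set X)) : Set (Set X) :=
  {s | ∃ A U : ℕ → Set X, (∀ n, A n ∈ Γ) ∧ (∀ n, U n ∈ Sigma0 X (1 + ξ)) ∧
    Pairwise (Function.onFun Disjoint U) ∧ s = ⋃ n, A n ∩ U n}

open Set TopologicalSpace

section Aux

variable {X : Type*} [TopologicalSpace X]

lemma sigma0_iff {ξ : Ordinal.{0}} {s : Set X} :
    s ∈ Sigma0 X ξ ↔ (ξ = 1 ∧ IsOpen s) ∨
      (1 < ξ ∧ ∃ (f : ℕ → Set X) (o : ℕ → Set.Iio ξ),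
        (∀ n, 1 ≤ (o n).1) ∧ (∀ n, (f n)ᶜ ∈ Sigma0 X (o n).1) ∧ s = ⋃ n, f n) := by
  rw [Sigma0]; rfl

lemma clopen_mem_sigma0 {η : Ordinal.{0}} (hη : 1 ≤ η) {s : Set X} (hs : IsClopen s) :
    s ∈ Sigma0 X η := by
  rcases hη.lt_or_eq with h | h
  · rw [sigma0_iff]
    refine Or.inr ⟨h, fun _ => s, fun _ => ⟨1, h⟩, fun _ => le_refl _, fun _ => ?_,
      (iUnion_const s).symm⟩
    rw [sigma0_iff]
    exact Or.inl ⟨rfl, hs.compl.isOpen⟩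
  · rw [sigma0_iff]
    exact Or.inl ⟨h.symm, hs.isOpen⟩

lemma open_decomp [SecondCountableTopology X]
    (hbasis : IsTopologicalBasis {s : Set X | IsClopen s}) {s : Set X} (hs : IsOpen s) :
    ∃ f : ℕ → Set X, (∀ n, IsClopen (f n)) ∧ s = ⋃ n, f n := by
  have hU : s = ⋃ b : {b : Set X // IsClopen b ∧ b ⊆ s}, (b : Set X) := by
    conv_lhs => rw [hbasis.open_eq_sUnion' hs]
    ext x
    simp [mem_sUnion]
  obtain ⟨T, hTc, hTU⟩ := isOpen_iUnion_countable
    (fun b : {b : Set X // IsClopen b ∧ b ⊆ s} => (b : Set X)) (fun b => b.2.1.isOpen)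
  rcases T.eq_empty_or_nonempty with rfl | hne
  · refine ⟨fun _ => ∅, fun _ => isClopen_empty, ?_⟩
    rw [hU, ← hTU]
    simp
  · obtain ⟨g, hg⟩ := hTc.exists_eq_range hne
    refine ⟨fun n => (g n : Set X), fun n => (g n).2.1, ?_⟩
    calc s = ⋃ i ∈ T, (i : Set X) := by rw [hTU, ← hU]
      _ = ⋃ n, ((g n : Set X)) := by rw [hg, biUnion_range]

lemma sigma0_mono [SecondCountableTopology X]
    (hbasis : IsTopologicalBasis {s : Set X | IsClopen s})
    {η η' : Ordinal.{0}} (hle : η ≤ η') {s : Set X} (hs : s ∈ Sigma0 X η) :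
    s ∈ Sigma0 X η' := by
  rcases sigma0_iff.mp hs with ⟨rfl, hso⟩ | ⟨h1, f, o, ho1, hoc, rfl⟩
  · rcases hle.lt_or_eq with h | h
    · obtain ⟨f, hf, rfl⟩ := open_decomp hbasis hso
      rw [sigma0_iff]
      refine Or.inr ⟨h, f, fun _ => ⟨1, h⟩, fun _ => le_refl _, fun n => ?_, rfl⟩
      rw [sigma0_iff]
      exact Or.inl ⟨rfl, (hf n).compl.isOpen⟩
    · rw [← h]; exact hs
  · rw [sigma0_iff]
    exact Or.inr ⟨h1.trans_le hle, f, fun n => ⟨(o n).1, (o n).2.trans_le hle⟩, ho1, hoc, rfl⟩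

lemma sigma0_union {η : Ordinal.{0}} {s t : Set X}
    (hs : s ∈ Sigma0 X η) (ht : t ∈ Sigma0 X η) : s ∪ t ∈ Sigma0 X η := by
  rcases sigma0_iff.mp hs with ⟨rfl, hso⟩ | ⟨h1, f, o, ho1, hoc, rfl⟩ <;>
    rcases sigma0_iff.mp ht with ⟨h1', hto⟩ | ⟨h1', g, o', ho1', hoc', rfl⟩
  · rw [sigma0_iff]; exact Or.inl ⟨rfl, hso.union hto⟩
  · exact absurd h1' (lt_irrefl _)
  · exact absurd (h1'.symm ▸ h1) (lt_irrefl _)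
  · rw [sigma0_iff]
    have e : ℕ ⊕ ℕ ≃ ℕ := Denumerable.eqv (ℕ ⊕ ℕ)
    refine Or.inr ⟨h1, fun n => Sum.elim f g (e.symm n), fun n => Sum.elim o o' (e.symm n),
      fun n => ?_, fun n => ?_, ?_⟩
    · rcases h : e.symm n with a | b <;> simp only [h, Sum.elim_inl, Sum.elim_inr]
      · exact ho1 a
      · exact ho1' b
    · rcases h : e.symm n with a | b <;> simp only [h, Sum.elim_inl, Sum.elim_inr]
      · exact hoc a
      · exact hoc' b
    · rw [e.symm.surjective.iUnion_comp (fun c => Sum.elim f g c), iUnion_sum]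
      rfl

lemma sigma0_inter [SecondCountableTopology X]
    (hbasis : IsTopologicalBasis {s : Set X | IsClopen s})
    {η : Ordinal.{0}} {s t : Set X}
    (hs : s ∈ Sigma0 X η) (ht : t ∈ Sigma0 X η) : s ∩ t ∈ Sigma0 X η := by
  rcases sigma0_iff.mp hs with ⟨rfl, hso⟩ | ⟨h1, f, o, ho1, hoc, rfl⟩ <;>
    rcases sigma0_iff.mp ht with ⟨h1', hto⟩ | ⟨h1', g, o', ho1', hoc', rfl⟩
  · rw [sigma0_iff]; exact Or.inl ⟨rfl, hso.inter hto⟩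
  · exact absurd h1' (lt_irrefl _)
  · exact absurd (h1'.symm ▸ h1) (lt_irrefl _)
  · rw [sigma0_iff]
    have e : ℕ × ℕ ≃ ℕ := Denumerable.eqv (ℕ × ℕ)
    refine Or.inr ⟨h1, fun n => f (e.symm n).1 ∩ g (e.symm n).2,
      fun n => ⟨max (o (e.symm n).1).1 (o' (e.symm n).2).1,
        Set.mem_Iio.mpr (max_lt (Set.mem_Iio.mp (o (e.symm n).1).2)
          (Set.mem_Iio.mp (o' (e.symm n).2).2))⟩,
      fun n => le_trans (ho1 _) (le_max_left _ _), fun n => ?_, ?_⟩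
    · rw [compl_inter]
      exact sigma0_union
        (sigma0_mono hbasis (le_max_left _ _) (hoc _))
        (sigma0_mono hbasis (le_max_right _ _) (hoc' _))
    · rw [e.symm.surjective.iUnion_comp (fun p : ℕ × ℕ => f p.1 ∩ g p.2)]
      ext x
      simp only [mem_inter_iff, mem_iUnion, Prod.exists]
      constructor
      · rintro ⟨⟨a, ha⟩, ⟨b, hb⟩⟩; exact ⟨a, b, ha, hb⟩
      · rintro ⟨a, b, ha, hb⟩; exact ⟨⟨a, ha⟩, ⟨b, hb⟩⟩

lemma sigma0_decomp [SecondCountableTopology X]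
    (hbasis : IsTopologicalBasis {s : Set X | IsClopen s})
    {η : Ordinal.{0}} {s : Set X} (hs : s ∈ Sigma0 X η) :
    ∃ T : ℕ → Set X, (∀ n, T n ∈ Sigma0 X η) ∧ (∀ n, (T n)ᶜ ∈ Sigma0 X η) ∧ s = ⋃ n, T n := by
  rcases sigma0_iff.mp hs with ⟨rfl, hso⟩ | ⟨h1, f, o, ho1, hoc, rfl⟩
  · obtain ⟨f, hf, rfl⟩ := open_decomp hbasis hso
    exact ⟨f, fun n => clopen_mem_sigma0 le_rfl (hf n),
      fun n => clopen_mem_sigma0 le_rfl (hf n).compl, rfl⟩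
  · refine ⟨f, fun n => ?_, fun n => sigma0_mono hbasis (o n).2.le (hoc n), rfl⟩
    rw [sigma0_iff]
    exact Or.inr ⟨h1, fun _ => f n, fun _ => o n, fun _ => ho1 n, fun _ => hoc n,
      (iUnion_const (f n)).symm⟩

end Aux

/-- If `D` is selfdual and `Γ = SU_ξ(D)`, then the dual class
`Γ̌ = {Z \ A : A ∈ Γ}` has the separation property: any two disjoint members of
`Γ̌` can be separated by a set in `Γ ∩ Γ̌`. -/
theorem statement16 {Z : Type*} [TopologicalSpace Z]
    [TopologicalSpace.MetrizableSpace Z] [TopologicalSpace.SeparableSpace Z]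
    [Nonempty Z]
    (hbasis : TopologicalSpace.IsTopologicalBasis {s : Set Z | IsClopen s})
    (ξ : Ordinal.{0}) (hξ : ξ.card ≤ Cardinal.aleph0)
    (D : Set (Set Z)) (hD : D = (fun s : Set Z => sᶜ) '' D) :
    ∀ A₀ ∈ (fun s : Set Z => sᶜ) '' SU Z ξ D,
      ∀ A₁ ∈ (fun s : Set Z => sᶜ) '' SU Z ξ D, A₀ ∩ A₁ = ∅ →
        ∃ C : Set Z, C ∈ SU Z ξ D ∧ C ∈ (fun s : Set Z => sᶜ) '' SU Z ξ D ∧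
          A₀ ⊆ C ∧ C ⊆ A₁ᶜ := by
  haveI : SecondCountableTopology Z := by
    letI := TopologicalSpace.pseudoMetrizableSpacePseudoMetric Z
    exact UniformSpace.secondCountable_of_separable Z
  classical
  have hcomplD : ∀ s ∈ D, sᶜ ∈ D := by
    intro s hs
    rw [hD]
    exact ⟨s, hs, rfl⟩
  rintro A₀ ⟨B₀, hB₀, rfl⟩ A₁ ⟨B₁, hB₁, rfl⟩ hdis
  obtain ⟨A, U, hA, hU, hUd, rfl⟩ := hB₀
  obtain ⟨A', U', hA', hU', hU'd, rfl⟩ := hB₁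
  simp only at hdis ⊢
  set B₀ : Set Z := ⋃ n, A n ∩ U n with hB₀def
  set B₁ : Set Z := ⋃ n, A' n ∩ U' n with hB₁def
  -- B₀ ∪ B₁ = univ
  have hZ : B₀ ∪ B₁ = univ := by
    rw [← compl_empty_iff, compl_union]
    exact hdis
  -- decompose each U n, U' n
  choose S hS1 hS2 hS3 using fun n => sigma0_decomp hbasis (hU n)
  choose S' hS'1 hS'2 hS'3 using fun n => sigma0_decomp hbasis (hU' n)
  -- combined index type
  let e : (ℕ × ℕ) ⊕ (ℕ × ℕ) ≃ ℕ := Denumerable.eqv ((ℕ × ℕ) ⊕ (ℕ × ℕ))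
  let T : (ℕ × ℕ) ⊕ (ℕ × ℕ) → Set Z := Sum.elim (fun p => S p.1 p.2) (fun p => S' p.1 p.2)
  let E : (ℕ × ℕ) ⊕ (ℕ × ℕ) → Set Z := Sum.elim (fun p => (A p.1)ᶜ) (fun p => A' p.1)
  have hTsig : ∀ c, T c ∈ Sigma0 Z (1 + ξ) := by
    rintro (⟨n, j⟩ | ⟨n, j⟩)
    · exact hS1 n j
    · exact hS'1 n j
  have hTcsig : ∀ c, (T c)ᶜ ∈ Sigma0 Z (1 + ξ) := by
    rintro (⟨n, j⟩ | ⟨n, j⟩)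
    · exact hS2 n j
    · exact hS'2 n j
  have hED : ∀ c, E c ∈ D := by
    rintro (⟨n, j⟩ | ⟨n, j⟩)
    · exact hcomplD _ (hA n)
    · exact hA' n
  -- the partition
  let P : ℕ → Set Z := fun i => T (e.symm i) ∩ ⋂ j ∈ Finset.range i, (T (e.symm j))ᶜ
  have hPsub : ∀ i, P i ⊆ T (e.symm i) := fun i => inter_subset_left
  have hPsig : ∀ i, P i ∈ Sigma0 Z (1 + ξ) := by
    have hQ : ∀ i, (⋂ j ∈ Finset.range i, (T (e.symm j))ᶜ) ∈ Sigma0 Z (1 + ξ) := by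
      intro i
      induction i with
      | zero =>
        simp only [Finset.range_zero, Finset.notMem_empty, iInter_of_empty, iInter_univ]
        exact clopen_mem_sigma0 (le_self_add : (1 : Ordinal.{0}) ≤ 1 + ξ) isClopen_univ
      | succ n ih =>
        rw [Finset.range_add_one]
        rw [Finset.set_biInter_insert]
        exact sigma0_inter hbasis (hTcsig _) ih
    exact fun i => sigma0_inter hbasis (hTsig _) (hQ i)
  have hPd' : ∀ i j : ℕ, i < j → Disjoint (P i) (P j) := by
    intro i j hij
    rw [Set.disjoint_left]
    intro x hxi hxj
    have hx : x ∈ (T (e.symm i))ᶜ := by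
      have h2 := hxj.2
      rw [mem_iInter₂] at h2
      exact h2 i (Finset.mem_range.mpr hij)
    exact hx hxi.1
  have hPd : Pairwise (Function.onFun Disjoint P) := by
    intro i j hij
    rcases hij.lt_or_gt with h | h
    · exact hPd' i j h
    · exact (hPd' j i h).symm
  -- every point is in some P i
  have hTcover : ∀ x : Z, ∃ i : ℕ, x ∈ T (e.symm i) := by
    intro x
    have hx : x ∈ B₀ ∪ B₁ := hZ ▸ mem_univ x
    rcases hx with hx | hx
    · obtain ⟨n, hn⟩ := mem_iUnion.mp hx
      have hxU : x ∈ U n := hn.2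
      rw [hS3 n] at hxU
      obtain ⟨j, hj⟩ := mem_iUnion.mp hxU
      exact ⟨e (Sum.inl (n, j)), by rw [Equiv.symm_apply_apply]; exact hj⟩
    · obtain ⟨n, hn⟩ := mem_iUnion.mp hx
      have hxU : x ∈ U' n := hn.2
      rw [hS'3 n] at hxU
      obtain ⟨j, hj⟩ := mem_iUnion.mp hxU
      exact ⟨e (Sum.inr (n, j)), by rw [Equiv.symm_apply_apply]; exact hj⟩
  have hPcover : ∀ x : Z, ∃ i : ℕ, x ∈ P i := by
    intro x
    refine ⟨Nat.find (hTcover x), Nat.find_spec (hTcover x), ?_⟩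
    rw [mem_iInter₂]
    intro j hj
    exact Nat.find_min (hTcover x) (Finset.mem_range.mp hj)
  -- membership criteria
  have hB₀iff : ∀ (x : Z) (n : ℕ), x ∈ U n → (x ∈ B₀ ↔ x ∈ A n) := by
    intro x n hxU
    constructor
    · intro hx
      obtain ⟨m, hm⟩ := mem_iUnion.mp hx
      rcases eq_or_ne m n with rfl | hmn
      · exact hm.1
      · exact absurd hxU (Set.disjoint_left.mp (hUd hmn) hm.2)
    · intro hx
      exact mem_iUnion.mpr ⟨n, hx, hxU⟩
  have hB₁iff : ∀ (x : Z) (n : ℕ), x ∈ U' n → (x ∈ B₁ ↔ x ∈ A' n) := by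
    intro x n hxU
    constructor
    · intro hx
      obtain ⟨m, hm⟩ := mem_iUnion.mp hx
      rcases eq_or_ne m n with rfl | hmn
      · exact hm.1
      · exact absurd hxU (Set.disjoint_left.mp (hU'd hmn) hm.2)
    · intro hx
      exact mem_iUnion.mpr ⟨n, hx, hxU⟩
  -- P i is inside the corresponding ambient set
  have hPU : ∀ (i : ℕ) (n j : ℕ), e.symm i = Sum.inl (n, j) → P i ⊆ U n := by
    intro i n j hc
    intro x hx
    have hxT : x ∈ T (e.symm i) := hPsub i hx
    rw [hc] at hxT
    have : x ∈ S n j := hxT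
    rw [hS3 n]
    exact mem_iUnion.mpr ⟨j, this⟩
  have hPU' : ∀ (i : ℕ) (n j : ℕ), e.symm i = Sum.inr (n, j) → P i ⊆ U' n := by
    intro i n j hc
    intro x hx
    have hxT : x ∈ T (e.symm i) := hPsub i hx
    rw [hc] at hxT
    have : x ∈ S' n j := hxT
    rw [hS'3 n]
    exact mem_iUnion.mpr ⟨j, this⟩
  -- the separating set
  refine ⟨⋃ i, E (e.symm i) ∩ P i, ?_, ?_, ?_, ?_⟩
  · exact ⟨fun i => E (e.symm i), P, fun i => hED _, hPsig, hPd, rfl⟩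
  · refine ⟨⋃ i, (E (e.symm i))ᶜ ∩ P i,
      ⟨fun i => (E (e.symm i))ᶜ, P, fun i => hcomplD _ (hED _), hPsig, hPd, rfl⟩, ?_⟩
    simp only
    ext x
    constructor
    · intro hx
      obtain ⟨i, hi⟩ := hPcover x
      have hE : x ∈ E (e.symm i) := by
        by_contra hE
        exact hx (mem_iUnion.mpr ⟨i, hE, hi⟩)
      exact mem_iUnion.mpr ⟨i, hE, hi⟩
    · intro hx
      rw [mem_compl_iff]
      intro hx'
      obtain ⟨i, hEi, hPi⟩ := mem_iUnion.mp hx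
      obtain ⟨j, hEj, hPj⟩ := mem_iUnion.mp hx'
      rcases eq_or_ne i j with rfl | hij
      · exact hEj hEi
      · exact Set.disjoint_left.mp (hPd hij) hPi hPj
  · -- B₀ᶜ ⊆ C
    intro x hx
    obtain ⟨i, hi⟩ := hPcover x
    refine mem_iUnion.mpr ⟨i, ?_, hi⟩
    rcases hc : e.symm i with ⟨n, j⟩ | ⟨n, j⟩
    · have hxU : x ∈ U n := hPU i n j hc hi
      exact fun hxA => hx ((hB₀iff x n hxU).mpr hxA)
    · have hxU : x ∈ U' n := hPU' i n j hc hi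
      have hxB₁ : x ∈ B₁ := by
        have hx' : x ∈ B₀ ∪ B₁ := hZ ▸ mem_univ x
        rcases hx' with h | h
        · exact absurd h hx
        · exact h
      exact (hB₁iff x n hxU).mp hxB₁
  · -- C ⊆ B₁
    rw [compl_compl]
    rintro x hx
    obtain ⟨i, hEi, hPi⟩ := mem_iUnion.mp hx
    rcases hc : e.symm i with ⟨n, j⟩ | ⟨n, j⟩
    · have hxU : x ∈ U n := hPU i n j hc hPi
      rw [hc] at hEi
      have hxnB₀ : x ∉ B₀ := fun h => hEi ((hB₀iff x n hxU).mp h)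
      have hx' : x ∈ B₀ ∪ B₁ := hZ ▸ mem_univ x
      rcases hx' with h | h
      · exact absurd h hxnB₀
      · exact h
    · have hxU : x ∈ U' n := hPU' i n j hc hPi
      rw [hc] at hEi
      exact (hB₁iff x n hxU).mpr hEi
end
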